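/- Let S be a subring of a commutative ring R and I an ideal of S. A polynomial f ∈ R[x] satisfies f(C) ∈ T_n(I) for all C ∈ T_n(S) if and only if for each k with 0 ≤ k ≤ n−1 there exists some i such that the (i, i+k)-entry of f(C) lies in I for all C ∈ T_{i+k}(S). -/

import Mathlib

open Polynomial Matrix

section Aux

variable {R : Type*} [CommRing R]

/-- The `(k+1) × (k+1)` window of `C` starting at position `a`. -/
def win (n a k : ℕ) (h : a + k < n) (C : Matrix (Fin n) (Fin n) R) :
    Matrix (Fin (k + 1)) (Fin (k + 1)) R :=
  fun p q => C ⟨a + p.1, by have := p.isLt; omega⟩ ⟨a + q.1, by have := q.isLt; omega⟩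

lemma blockTriangular_pow {n : ℕ} {C : Matrix (Fin n) (Fin n) R}
    (hC : C.BlockTriangular id) (m : ℕ) : (C ^ m).BlockTriangular id := by
  induction m with
  | zero => simpa using Matrix.blockTriangular_one
  | succ m ih => rw [pow_succ]; exact ih.mul hC

lemma win_pow {n : ℕ} (a k : ℕ) (h : a + k < n) (C : Matrix (Fin n) (Fin n) R)
    (hC : C.BlockTriangular id) (m : ℕ) (p q : Fin (k + 1)) :
    ((win n a k h C) ^ m) p q
      = (C ^ m) ⟨a + p.1, by have := p.isLt; omega⟩ ⟨a + q.1, by have := q.isLt; omega⟩ := by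
  induction m generalizing p q with
  | zero =>
    simp only [pow_zero, Matrix.one_apply, Fin.ext_iff]
    have := p.isLt; have := q.isLt
    by_cases hpq : (p : ℕ) = q
    · rw [if_pos hpq, if_pos (by omega)]
    · rw [if_neg hpq, if_neg (by omega)]
  | succ m ih =>
    have hCm := blockTriangular_pow hC m
    rw [pow_succ, pow_succ, Matrix.mul_apply, Matrix.mul_apply]
    have hp := p.isLt; have hq := q.isLt
    -- embedding
    let e : Fin (k + 1) ↪ Fin n :=
      ⟨fun j => ⟨a + j.1, by have := j.isLt; omega⟩, by
        intro x y hxy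
        have : a + x.1 = a + y.1 := congrArg Fin.val hxy
        exact Fin.ext (by omega)⟩
    have hmap : ∀ j' : Fin n, j' ∈ Finset.univ.map e ↔ a ≤ j'.1 ∧ j'.1 ≤ a + k := by
      intro j'
      simp only [Finset.mem_map, Finset.mem_univ, true_and]
      constructor
      · rintro ⟨j, rfl⟩; simp only [e, Function.Embedding.coeFn_mk]
        exact ⟨Nat.le_add_right _ _, by have := j.isLt; show a + j.1 ≤ a + k; omega⟩
      · rintro ⟨h1, h2⟩
        exact ⟨⟨j'.1 - a, by omega⟩, Fin.ext (by show a + (j'.1 - a) = j'.1; omega)⟩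
    have hsub : ∑ j' ∈ Finset.univ.map e,
          (C ^ m) ⟨a + p.1, by omega⟩ j' * C j' ⟨a + q.1, by omega⟩
        = ∑ j' : Fin n, (C ^ m) ⟨a + p.1, by omega⟩ j' * C j' ⟨a + q.1, by omega⟩ := by
      apply Finset.sum_subset (Finset.subset_univ _)
      intro j' _ hj'
      rw [hmap] at hj'
      rcases Nat.lt_or_ge j'.1 a with hlt | hge
      · have : (C ^ m) ⟨a + p.1, by omega⟩ j' = 0 := by
          refine hCm ?_
          show j'.1 < a + p.1
          omega
        rw [this, zero_mul]
      · have hgt : a + k < j'.1 := by omega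
        have : C j' ⟨a + q.1, by omega⟩ = 0 := by
          refine hC ?_
          show a + q.1 < j'.1
          omega
        rw [this, mul_zero]
    rw [← hsub, Finset.sum_map]
    apply Finset.sum_congr rfl
    intro j _
    rw [ih p j]
    rfl

lemma aeval_win {n : ℕ} (a k : ℕ) (h : a + k < n) (C : Matrix (Fin n) (Fin n) R)
    (hC : C.BlockTriangular id) (f : R[X]) (p q : Fin (k + 1)) :
    (Polynomial.aeval (win n a k h C) f) p q
      = (Polynomial.aeval C f) ⟨a + p.1, by have := p.isLt; omega⟩
          ⟨a + q.1, by have := q.isLt; omega⟩ := by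
  rw [Polynomial.aeval_eq_sum_range, Polynomial.aeval_eq_sum_range]
  rw [Matrix.sum_apply, Matrix.sum_apply]
  apply Finset.sum_congr rfl
  intro m _
  rw [Matrix.smul_apply, Matrix.smul_apply, win_pow a k h C hC m p q]

lemma aeval_blockTriangular {n : ℕ} (C : Matrix (Fin n) (Fin n) R)
    (hC : C.BlockTriangular id) (f : R[X]) :
    (Polynomial.aeval C f).BlockTriangular id := by
  rw [Polynomial.aeval_eq_sum_range]
  intro i j hij
  rw [Matrix.sum_apply]
  apply Finset.sum_eq_zero
  intro m _
  rw [Matrix.smul_apply, blockTriangular_pow hC m hij, smul_zero]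

end Aux

section Key

variable {R : Type*} [CommRing R]

lemma key {n : ℕ} (k i : ℕ) (S : Subring R) (I : Ideal S) (f : R[X])
    (hk : ∀ C : Matrix (Fin (i + k + 1)) (Fin (i + k + 1)) R, C.BlockTriangular id →
      (∀ a b, C a b ∈ S) →
      ∃ s ∈ I, (s : R) = (Polynomial.aeval C f) ⟨i, Nat.lt_of_le_of_lt (Nat.le_add_right i k) (Nat.lt_succ_self _)⟩ (Fin.last (i + k)))
    (C : Matrix (Fin n) (Fin n) R) (hC : C.BlockTriangular id) (hCS : ∀ a b, C a b ∈ S)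
    (a : ℕ) (h : a + k < n) :
    ∃ s ∈ I, (s : R) = (Polynomial.aeval C f) ⟨a, by omega⟩ ⟨a + k, h⟩ := by
  set E : Matrix (Fin (i + k + 1)) (Fin (i + k + 1)) R := fun p q =>
    if hpq : i ≤ p.1 ∧ p.1 ≤ q.1 then
      C ⟨a + (p.1 - i), by have := q.isLt; omega⟩ ⟨a + (q.1 - i), by have := q.isLt; omega⟩
    else 0 with hE
  have hEtri : E.BlockTriangular id := by
    intro p q hpq
    have hqp : q.1 < p.1 := hpq
    rw [hE]
    exact dif_neg (by omega)
  have hES : ∀ p q, E p q ∈ S := by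
    intro p q
    rw [hE]
    dsimp only
    split
    · exact hCS _ _
    · exact S.zero_mem
  have hwin : win (i + k + 1) i k (by omega) E = win n a k h C := by
    funext p q
    have hp := p.isLt; have hq := q.isLt
    simp only [win, hE]
    by_cases hpq : p.1 ≤ q.1
    · rw [dif_pos (show i ≤ i + p.1 ∧ i + p.1 ≤ i + q.1 from ⟨by omega, by omega⟩)]
      exact congrArg₂ C (Fin.ext (show a + (i + p.1 - i) = a + p.1 by omega))
        (Fin.ext (show a + (i + q.1 - i) = a + q.1 by omega))
    · rw [dif_neg (show ¬(i ≤ i + p.1 ∧ i + p.1 ≤ i + q.1) by omega)]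
      refine (hC ?_).symm
      show a + q.1 < a + p.1
      omega
  obtain ⟨s, hs, hseq⟩ := hk E hEtri hES
  refine ⟨s, hs, ?_⟩
  rw [hseq]
  have e1 := aeval_win i k (by omega : i + k < i + k + 1) E hEtri f ⟨0, by omega⟩ ⟨k, by omega⟩
  have e2 := aeval_win a k h C hC f ⟨0, by omega⟩ ⟨k, by omega⟩
  rw [hwin] at e1
  exact e1.symm.trans e2

end Key

theorem stmt10 (n : ℕ) (R : Type*) [CommRing R] (S : Subring R) (I : Ideal S)
    (f : Polynomial R) :
    (∀ C : Matrix (Fin n) (Fin n) R, C.BlockTriangular id → (∀ a b, C a b ∈ S) →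
        (Polynomial.aeval C f).BlockTriangular id ∧
          ∀ a b : Fin n, ∃ s ∈ I, (s : R) = (Polynomial.aeval C f) a b)
    ↔ ∀ k < n, ∃ i : ℕ,
        ∀ C : Matrix (Fin (i + k + 1)) (Fin (i + k + 1)) R, C.BlockTriangular id →
          (∀ a b, C a b ∈ S) →
          ∃ s ∈ I, (s : R) = (Polynomial.aeval C f) ⟨i, by omega⟩ (Fin.last (i + k)) := by
  constructor
  · intro h k hk
    obtain ⟨i, rfl⟩ : ∃ i, n = i + k + 1 := ⟨n - k - 1, by omega⟩
    refine ⟨i, fun C hC hCS => ?_⟩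
    exact (h C hC hCS).2 ⟨i, by omega⟩ (Fin.last (i + k))
  · intro h C hC hCS
    have htri : (Polynomial.aeval C f).BlockTriangular id := aeval_blockTriangular C hC f
    refine ⟨htri, fun a b => ?_⟩
    rcases Nat.lt_or_ge b.1 a.1 with hba | hab
    · refine ⟨0, I.zero_mem, ?_⟩
      rw [htri (show id b < id a from hba)]
      simp
    · have hbn := b.isLt
      obtain ⟨i, hi⟩ := h (b.1 - a.1) (by omega)
      obtain ⟨s, hs, hseq⟩ := key (b.1 - a.1) i S I f hi C hC hCS a.1 (by omega)
      refine ⟨s, hs, hseq.trans ?_⟩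
      have h1 : (⟨a.1, a.isLt⟩ : Fin n) = a := Fin.ext rfl
      have h2 : (⟨a.1 + (b.1 - a.1), by omega⟩ : Fin n) = b :=
        Fin.ext (show a.1 + (b.1 - a.1) = b.1 by omega)
      exact congrArg₂ (Polynomial.aeval C f) h1 h2
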